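/- Forced deletion via many disjoint paths to inequivalent terminals (Node Multiway Cut-Uncut): let (G, T, R, k) be an instance with terminal set T and equivalence relation R on T. Suppose v ∈ V(G) \ T and there exist k+2 simple paths P₁, ..., P_{k+2} in G, each starting at v and ending at a terminal v_i ∈ T, with pairwise disjoint vertex sets except for the shared vertex v, and with (v_i, v_j) ∉ R for all i ≠ j. Then every solution X (a set of at most k nonterminal vertices whose removal makes terminals lie in the same component exactly according to R) contains v. -/

import Mathlib

variable {V : Type*}

/-- The graph `G` with the vertex set `X` (effectively) removed: only edges with both
endpoints outside `X` are kept, so the vertices of `X` become isolated. -/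
def delV (G : SimpleGraph V) (X : Set V) : SimpleGraph V where
  Adj u w := G.Adj u w ∧ u ∉ X ∧ w ∉ X
  symm := by constructor; rintro u w ⟨h, hu, hw⟩; exact ⟨h.symm, hw, hu⟩
  loopless := by constructor; rintro u ⟨h, -, -⟩; exact G.loopless.irrefl u h

/-- `X` is a solution to the Node Multiway Cut-Uncut instance `(G, T, R, k)`:
`X` is a set of at most `k` nonterminal vertices and two terminals lie in the same
connected component of `G \ X` exactly when they are `R`-equivalent. -/
def NMWCUSol (G : SimpleGraph V) (T : Set V) (R : V → V → Prop) (k : ℕ)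
    (X : Set V) : Prop :=
  X ⊆ Tᶜ ∧ X.ncard ≤ k ∧ ∀ u ∈ T, ∀ v ∈ T, ((delV G X).Reachable u v ↔ R u v)

/-- The vertex `v` admits `k+2` paths to terminals of pairwise `R`-inequivalent classes,
pairwise vertex-disjoint except for the shared endpoint `v`. -/
def ManyPaths (G : SimpleGraph V) (T : Set V) (R : V → V → Prop) (k : ℕ)
    (v : V) : Prop :=
  ∃ t : Fin (k + 2) → V, (∀ i, t i ∈ T) ∧ (∀ i j, i ≠ j → ¬ R (t i) (t j)) ∧
    ∃ P : (i : Fin (k + 2)) → G.Walk v (t i),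
      (∀ i, (P i).IsPath) ∧
      ∀ i j, i ≠ j → ∀ x, x ∈ (P i).support → x ∈ (P j).support → x = v

/-- Forced deletion via many disjoint paths to inequivalent terminals: if a nonterminal
vertex `v` has `k+2` paths to pairwise `R`-inequivalent terminals, disjoint except at
`v`, then every solution of the Node Multiway Cut-Uncut instance contains `v`. -/
theorem manyPaths_forces_deletion [Fintype V] (G : SimpleGraph V)
    (T : Set V) (R : V → V → Prop) (k : ℕ)
    (hrefl : ∀ t ∈ T, R t t)
    (hsym : ∀ s ∈ T, ∀ t ∈ T, R s t → R t s)
    (htrans : ∀ s ∈ T, ∀ t ∈ T, ∀ r ∈ T, R s t → R t r → R s r)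
    (v : V) (hv : v ∉ T) (hmany : ManyPaths G T R k v) :
    ∀ X : Set V, NMWCUSol G T R k X → v ∈ X := by
  classical
  rintro X ⟨hXT, hXk, hsol⟩
  by_contra hvX
  obtain ⟨t, htT, htR, P, hPpath, hPdisj⟩ := hmany
  -- walks avoiding X give reachability in delV
  have transfer : ∀ {u w : V} (p : G.Walk u w), (∀ x ∈ p.support, x ∉ X) →
      (delV G X).Reachable u w := by
    intro u w p
    induction p with
    | nil => intro _; exact SimpleGraph.Reachable.refl _
    | cons h p ih =>
      intro hsup
      have h1 : (delV G X).Adj _ _ :=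
        ⟨h, hsup _ (SimpleGraph.Walk.start_mem_support _),
          hsup _ (by simp [SimpleGraph.Walk.support_cons,
            SimpleGraph.Walk.start_mem_support])⟩
      exact h1.reachable.trans (ih fun x hx =>
        hsup x (by simp [SimpleGraph.Walk.support_cons, hx]))
  -- bad indices: paths hitting X
  set bad : Finset (Fin (k + 2)) :=
    Finset.univ.filter (fun i => ∃ x ∈ X, x ∈ (P i).support) with hbad
  have hcard : bad.card ≤ k := by
    have hinj : ∃ f : Fin (k + 2) → V, ∀ i ∈ bad, f i ∈ X ∧ f i ∈ (P i).support := by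
      refine ⟨fun i => if h : ∃ x ∈ X, x ∈ (P i).support then h.choose else v, ?_⟩
      intro i hi
      have h : ∃ x ∈ X, x ∈ (P i).support := by
        simpa [hbad] using hi
      simp only [dif_pos h]
      exact ⟨h.choose_spec.1, h.choose_spec.2⟩
    obtain ⟨f, hf⟩ := hinj
    have hXfin : X.Finite := Set.toFinite X
    have : bad.card ≤ X.ncard := by
      rw [Set.ncard_eq_toFinset_card' X]
      apply Finset.card_le_card_of_injOn f
      · intro i hi; simpa using (hf i hi).1
      · intro i hi j hj hij
        by_contra hne
        have := hPdisj i j hne (f i) (hf i hi).2 (hij ▸ (hf j hj).2)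
        exact hvX (this ▸ (hf i hi).1)
    omega
  -- get two good indices
  have hgood : 2 ≤ badᶜ.card := by
    have := Finset.card_compl bad
    simp only [Fintype.card_fin] at this
    omega
  obtain ⟨i, hi, j, hj, hij⟩ := Finset.one_lt_card.mp hgood
  have havoid : ∀ m, m ∈ badᶜ → ∀ x ∈ (P m).support, x ∉ X := by
    intro m hm x hx hxX
    have : m ∉ bad := Finset.mem_compl.mp hm
    exact this (by simp only [hbad, Finset.mem_filter, Finset.mem_univ, true_and]
                   exact ⟨x, hxX, hx⟩)
  have r1 : (delV G X).Reachable v (t i) := transfer (P i) (havoid i hi)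
  have r2 : (delV G X).Reachable v (t j) := transfer (P j) (havoid j hj)
  have : R (t i) (t j) := (hsol _ (htT i) _ (htT j)).mp (r1.symm.trans r2)
  exact htR i j hij this
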